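/- Let (M,d) be a metric space and S, T: M → M mappings with S(M) ⊆ T(M) such that the pair (S,T) is a ψ-(α,β,γ)-contraction pair. Then for any sequence (x_n) in M satisfying Sx_n = Tx_{n+1} for all n ≥ 0, the sequence (y_n) defined by y_n = Sx_n = Tx_{n+1} is a Cauchy sequence in M. -/

import Mathlib

open Filter Set Topology

/-- An altering distance function `ψ : [0,∞) → [0,∞)`, modeled as a function on `ℝ`
whose relevant properties are stated on `[0,∞)`. -/
def AlteringDistance (ψ : ℝ → ℝ) : Prop :=
  (∀ t, 0 ≤ t → 0 ≤ ψ t) ∧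
  (∀ t, 0 ≤ t → (ψ t = 0 ↔ t = 0)) ∧
  MonotoneOn ψ (Set.Ici 0) ∧
  ContinuousOn ψ (Set.Ici 0)

/-- Condition (*) on the contractive parameter functions `α, β, γ : [0,∞) → [0,1)`:
`α(t)+β(t)+γ(t) < 1` for all `t ≥ 0`, `limsup_{s→0⁺} γ(s) < 1`, and
`limsup_{s→t⁺} (α(s)+β(s))/(1-γ(s)) < 1` for every `t > 0`. -/
def ParamCondition (α β γ : ℝ → ℝ) : Prop :=
  (∀ t, 0 ≤ t → 0 ≤ α t ∧ α t < 1) ∧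
  (∀ t, 0 ≤ t → 0 ≤ β t ∧ β t < 1) ∧
  (∀ t, 0 ≤ t → 0 ≤ γ t ∧ γ t < 1) ∧
  (∀ t, 0 ≤ t → α t + β t + γ t < 1) ∧
  Filter.limsup γ (𝓝[>] (0:ℝ)) < 1 ∧
  (∀ t : ℝ, 0 < t →
    Filter.limsup (fun s => (α s + β s) / (1 - γ s)) (𝓝[>] t) < 1)

/-- The pair `(S,T)` is a `ψ-(α,β,γ)`-contraction pair. -/
def ContractionPair {M : Type*} [MetricSpace M] (S T : M → M)
    (ψ α β γ : ℝ → ℝ) : Prop :=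
  AlteringDistance ψ ∧ ParamCondition α β γ ∧
  ∀ x y : M,
    ψ (dist (S x) (S y)) ≤
      α (dist (T x) (T y)) * ψ (dist (T x) (T y)) +
      β (dist (T x) (T y)) * ψ (dist (S x) (T x)) +
      γ (dist (T x) (T y)) * ψ (dist (S y) (T y))

private lemma aux_eventually_bound {f : ℝ → ℝ} {t : ℝ} (ht : 0 ≤ t)
    (hb : ∀ s, 0 ≤ s → f s ≤ 1)
    (h : Filter.limsup f (𝓝[>] t) < 1) :
    ∃ c, 0 ≤ c ∧ c < 1 ∧ ∃ δ > 0, ∀ s ∈ Set.Ioo t (t + δ), f s ≤ c := by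
  set L := Filter.limsup f (𝓝[>] t) with hL
  refine ⟨max ((L + 1) / 2) 0, le_max_right _ _, max_lt (by linarith) one_pos, ?_⟩
  have hbdd : Filter.IsBoundedUnder (· ≤ ·) (𝓝[>] t) f := by
    refine Filter.isBoundedUnder_of_eventually_le (a := 1) ?_
    filter_upwards [self_mem_nhdsWithin] with s hs
    exact hb s (le_trans ht (le_of_lt hs))
  have hev : ∀ᶠ s in 𝓝[>] t, f s < max ((L + 1) / 2) 0 := by
    apply Filter.eventually_lt_of_limsup_lt _ hbdd
    exact lt_of_lt_of_le (by linarith) (le_max_left _ _)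
  rw [Filter.eventually_iff, mem_nhdsGT_iff_exists_Ioo_subset] at hev
  obtain ⟨u, hu, hsub⟩ := hev
  refine ⟨u - t, sub_pos.mpr hu, fun s hs => ?_⟩
  have hmem : s ∈ Set.Ioo t u := ⟨hs.1, by linarith [hs.2]⟩
  exact le_of_lt (hsub hmem)

private lemma lem_anti {ψ q : ℝ → ℝ} {D : ℕ → ℝ}
    (hψ0 : ∀ t, 0 ≤ t → 0 ≤ ψ t)
    (hψiff : ∀ t, 0 ≤ t → (ψ t = 0 ↔ t = 0))
    (hψmono : MonotoneOn ψ (Set.Ici 0))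
    (hq0 : ∀ s, 0 ≤ s → 0 ≤ q s)
    (hq1 : ∀ s, 0 ≤ s → q s < 1)
    (hD0 : ∀ n, 0 ≤ D n)
    (hrec : ∀ n, ψ (D (n + 1)) ≤ q (D n) * ψ (D n)) :
    ∀ n, D (n + 1) ≤ D n := by
  intro n
  by_contra hcon
  push_neg at hcon
  have h1 : ψ (D n) ≤ ψ (D (n + 1)) := hψmono (hD0 n) (hD0 (n + 1)) hcon.le
  have hpos : 0 < D (n + 1) := lt_of_le_of_lt (hD0 n) hcon
  have hψpos : 0 < ψ (D (n + 1)) :=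
    lt_of_le_of_ne (hψ0 _ (hD0 _)) fun h =>
      (ne_of_gt hpos) ((hψiff _ (hD0 _)).1 h.symm)
  have h2 : q (D n) * ψ (D n) ≤ q (D n) * ψ (D (n + 1)) :=
    mul_le_mul_of_nonneg_left h1 (hq0 _ (hD0 _))
  have h3 : q (D n) * ψ (D (n + 1)) < 1 * ψ (D (n + 1)) :=
    mul_lt_mul_of_pos_right (hq1 _ (hD0 _)) hψpos
  have h4 := hrec n
  linarith

private lemma lem_step1 {ψ q : ℝ → ℝ} {D : ℕ → ℝ}
    (hψ0 : ∀ t, 0 ≤ t → 0 ≤ ψ t)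
    (hψiff : ∀ t, 0 ≤ t → (ψ t = 0 ↔ t = 0))
    (hψmono : MonotoneOn ψ (Set.Ici 0))
    (hq0 : ∀ s, 0 ≤ s → 0 ≤ q s)
    (hq1 : ∀ s, 0 ≤ s → q s < 1)
    (hqbd : ∀ t, 0 < t → ∃ c, 0 ≤ c ∧ c < 1 ∧ ∃ δ > 0, ∀ s ∈ Set.Ioo t (t + δ), q s ≤ c)
    (hD0 : ∀ n, 0 ≤ D n)
    (hrec : ∀ n, ψ (D (n + 1)) ≤ q (D n) * ψ (D n)) :
    Filter.Tendsto D Filter.atTop (𝓝 0) := by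
  have hanti' := lem_anti hψ0 hψiff hψmono hq0 hq1 hD0 hrec
  have hanti : Antitone D := antitone_nat_of_succ_le hanti'
  have hbdd : BddBelow (Set.range D) := ⟨0, by rintro _ ⟨n, rfl⟩; exact hD0 n⟩
  have htends : Filter.Tendsto D Filter.atTop (𝓝 (⨅ n, D n)) :=
    tendsto_atTop_ciInf hanti hbdd
  have htle : ∀ n, (⨅ n, D n) ≤ D n := fun n => ciInf_le hbdd n
  have ht0 : 0 ≤ ⨅ n, D n := le_ciInf hD0
  suffices h : (⨅ n, D n) = 0 by rwa [h] at htends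
  by_contra hne
  have htpos : 0 < ⨅ n, D n := lt_of_le_of_ne ht0 (Ne.symm hne)
  set t := ⨅ n, D n with htdef
  have hψt : 0 < ψ t :=
    lt_of_le_of_ne (hψ0 t ht0) fun h => (ne_of_gt htpos) ((hψiff t ht0).1 h.symm)
  have hstrict : ∀ n, t < D n := by
    intro n
    rcases lt_or_eq_of_le (htle n) with h | h
    · exact h
    · exfalso
      have hDn : D n = t := h.symm
      have hDn1 : D (n + 1) = t := le_antisymm (hDn ▸ hanti' n) (htle (n + 1))
      have h5 := hrec n
      rw [hDn, hDn1] at h5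
      nlinarith [hq1 t ht0, hψt]
  obtain ⟨c, hc0, hc1, δ, hδ, hcb⟩ := hqbd t htpos
  have hev : ∀ᶠ n in Filter.atTop, D n < t + δ :=
    htends.eventually_lt_const (by linarith)
  obtain ⟨N, hN⟩ := hev.exists
  have hgeo : ∀ k, ψ (D (N + k)) ≤ c ^ k * ψ (D N) := by
    intro k
    induction k with
    | zero => simp
    | succ k ih =>
      have hmem : D (N + k) ∈ Set.Ioo t (t + δ) :=
        ⟨hstrict _, lt_of_le_of_lt (hanti (Nat.le_add_right N k)) hN⟩
      calc ψ (D (N + (k + 1))) = ψ (D ((N + k) + 1)) := rfl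
        _ ≤ q (D (N + k)) * ψ (D (N + k)) := hrec _
        _ ≤ c * ψ (D (N + k)) :=
            mul_le_mul_of_nonneg_right (hcb _ hmem) (hψ0 _ (hD0 _))
        _ ≤ c * (c ^ k * ψ (D N)) := mul_le_mul_of_nonneg_left ih hc0
        _ = c ^ (k + 1) * ψ (D N) := by ring
  have hlim : Filter.Tendsto (fun k => c ^ k * ψ (D N)) Filter.atTop (𝓝 0) := by
    simpa using (tendsto_pow_atTop_nhds_zero_of_lt_one hc0 hc1).mul_const (ψ (D N))
  obtain ⟨k, hk⟩ := (hlim.eventually_lt_const hψt).exists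
  have h1 : ψ t ≤ ψ (D (N + k)) := hψmono ht0 (hD0 _) (htle _)
  linarith [hgeo k]

private lemma cauchy_aux {M : Type*} [MetricSpace M] {ψ α β γ : ℝ → ℝ}
    (hψ : AlteringDistance ψ) (hpar : ParamCondition α β γ) (y : ℕ → M)
    (key : ∀ a b : ℕ, ψ (dist (y (a + 1)) (y (b + 1))) ≤
      α (dist (y a) (y b)) * ψ (dist (y a) (y b)) +
      β (dist (y a) (y b)) * ψ (dist (y a) (y (a + 1))) +
      γ (dist (y a) (y b)) * ψ (dist (y b) (y (b + 1)))) :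
    CauchySeq y := by
  obtain ⟨hψ0, hψiff, hψmono, hψcont⟩ := hψ
  obtain ⟨hα, hβ, hγ, hsum, _, hqlim⟩ := hpar
  have hγ1 : ∀ s : ℝ, 0 ≤ s → 0 < 1 - γ s := fun s hs => by linarith [(hγ s hs).2]
  have hq0 : ∀ s : ℝ, 0 ≤ s → 0 ≤ (α s + β s) / (1 - γ s) := fun s hs =>
    div_nonneg (by linarith [(hα s hs).1, (hβ s hs).1]) (hγ1 s hs).le
  have hq1 : ∀ s : ℝ, 0 ≤ s → (α s + β s) / (1 - γ s) < 1 := fun s hs =>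
    (div_lt_one (hγ1 s hs)).2 (by linarith [hsum s hs])
  have hqbd : ∀ t : ℝ, 0 < t → ∃ c, 0 ≤ c ∧ c < 1 ∧
      ∃ δ > 0, ∀ s ∈ Set.Ioo t (t + δ), (α s + β s) / (1 - γ s) ≤ c :=
    fun t ht => aux_eventually_bound ht.le (fun s hs => (hq1 s hs).le) (hqlim t ht)
  have hD0 : ∀ n : ℕ, 0 ≤ dist (y n) (y (n + 1)) := fun n => dist_nonneg
  have hrec : ∀ n : ℕ, ψ (dist (y (n + 1)) (y (n + 1 + 1))) ≤
      (α (dist (y n) (y (n + 1))) + β (dist (y n) (y (n + 1)))) /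
        (1 - γ (dist (y n) (y (n + 1)))) * ψ (dist (y n) (y (n + 1))) := by
    intro n
    have h := key n (n + 1)
    have hp := hγ1 _ (hD0 n)
    rw [div_mul_eq_mul_div, le_div_iff₀ hp]
    nlinarith [h]
  have hanti' : ∀ n : ℕ, dist (y (n + 1)) (y (n + 1 + 1)) ≤ dist (y n) (y (n + 1)) :=
    lem_anti (q := fun s => (α s + β s) / (1 - γ s)) hψ0 hψiff hψmono hq0 hq1 hD0 hrec
  have hDlim : Filter.Tendsto (fun n => dist (y n) (y (n + 1))) Filter.atTop (𝓝 0) :=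
    lem_step1 (q := fun s => (α s + β s) / (1 - γ s)) hψ0 hψiff hψmono hq0 hq1 hqbd hD0 hrec
  have hDle : ∀ i j : ℕ, i ≤ j → dist (y j) (y (j + 1)) ≤ dist (y i) (y (i + 1)) := by
    intro i j hij
    induction hij with
    | refl => exact le_rfl
    | step h ih => exact le_trans (hanti' _) ih
  rw [Metric.cauchySeq_iff]
  by_contra hcon
  push_neg at hcon
  obtain ⟨ε, hε, hNC⟩ := hcon
  have he : 0 < ε / 2 := by linarith
  have hpair : ∀ k : ℕ, ∃ n, k ≤ n ∧ ∃ m, n < m ∧ ε / 2 < dist (y m) (y n) := by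
    intro k
    obtain ⟨m, hm, n, hn, hd⟩ := hNC k
    rcases lt_trichotomy m n with h | h | h
    · exact ⟨m, hm, n, h, by rw [dist_comm]; linarith⟩
    · exfalso; rw [h, dist_self] at hd; linarith
    · exact ⟨n, hn, m, h, by linarith⟩
  have hmain : ∀ k : ℕ, ∃ a b : ℕ, k ≤ a ∧ a < b ∧
      ε / 2 < dist (y b) (y a) ∧ dist (y (b - 1)) (y a) ≤ ε / 2 := by
    intro k
    obtain ⟨n, hn, hEx⟩ := hpair k
    have hspec := Nat.find_spec hEx
    have h1 : n < Nat.find hEx := hspec.1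
    refine ⟨n, Nat.find hEx, hn, hspec.1, hspec.2, ?_⟩
    rcases Nat.lt_or_ge n (Nat.find hEx - 1) with h | h
    · have hmin := Nat.find_min hEx (show Nat.find hEx - 1 < Nat.find hEx by omega)
      push_neg at hmin
      exact hmin h
    · have heq : Nat.find hEx - 1 = n := by omega
      rw [heq, dist_self]; linarith
  choose a b hka hab hlt hle using hmain
  have htub : ∀ k : ℕ, dist (y (a k)) (y (b k)) ≤ ε / 2 + dist (y k) (y (k + 1)) := by
    intro k
    have hb1 : b k - 1 + 1 = b k := by have := hab k; omega
    have h2 : dist (y (a k)) (y (b k)) ≤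
        dist (y (a k)) (y (b k - 1)) + dist (y (b k - 1)) (y (b k)) := dist_triangle _ _ _
    have h3 : dist (y (a k)) (y (b k - 1)) ≤ ε / 2 := by
      rw [dist_comm]; exact hle k
    have h5 : k ≤ b k - 1 := by have := hka k; have := hab k; omega
    have h4 : dist (y (b k - 1)) (y (b k)) ≤ dist (y k) (y (k + 1)) := by
      have h6 := hDle k (b k - 1) h5
      rwa [hb1] at h6
    linarith
  obtain ⟨c, hc0, hc1, δ, hδ, hcb⟩ := hqbd (ε / 2) he
  have hαle : ∀ s ∈ Set.Ioo (ε / 2) (ε / 2 + δ), α s ≤ c := by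
    intro s hs
    have hs0 : (0 : ℝ) ≤ s := le_trans he.le hs.1.le
    have hqs : (α s + β s) / (1 - γ s) ≤ c := hcb s hs
    have hab' := (div_le_iff₀ (hγ1 s hs0)).1 hqs
    nlinarith [(hβ s hs0).1, (hγ s hs0).1, mul_nonneg hc0 (hγ s hs0).1]
  have hψ0eq : ψ 0 = 0 := (hψiff 0 le_rfl).2 rfl
  have hψcomp : ∀ (z : ℕ → ℝ) (l : ℝ), 0 ≤ l → (∀ k, 0 ≤ z k) →
      Filter.Tendsto z Filter.atTop (𝓝 l) →
      Filter.Tendsto (fun k => ψ (z k)) Filter.atTop (𝓝 (ψ l)) := by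
    intro z l hl hz hzt
    exact (hψcont l hl).tendsto.comp
      (tendsto_nhdsWithin_of_tendsto_nhds_of_eventually_within _ hzt
        (Filter.Eventually.of_forall hz))
  have hev : ∀ᶠ k in Filter.atTop,
      ψ (max (ε / 2 - 2 * dist (y k) (y (k + 1))) 0) ≤
        c * ψ (ε / 2 + dist (y k) (y (k + 1))) + 2 * ψ (dist (y k) (y (k + 1))) := by
    have hsmall : ∀ᶠ k in Filter.atTop, dist (y k) (y (k + 1)) < δ :=
      hDlim.eventually_lt_const hδ
    filter_upwards [hsmall] with k hk
    have hDk0 : (0 : ℝ) ≤ dist (y k) (y (k + 1)) := dist_nonneg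
    have htk1 : ε / 2 < dist (y (a k)) (y (b k)) := by
      rw [dist_comm]; exact hlt k
    have htk2 := htub k
    have htkIoo : dist (y (a k)) (y (b k)) ∈ Set.Ioo (ε / 2) (ε / 2 + δ) :=
      ⟨htk1, by linarith⟩
    have hKey := key (a k) (b k)
    have hDa : dist (y (a k)) (y (a k + 1)) ≤ dist (y k) (y (k + 1)) :=
      hDle k (a k) (hka k)
    have hDb : dist (y (b k)) (y (b k + 1)) ≤ dist (y k) (y (k + 1)) :=
      hDle k (b k) (by have := hka k; have := hab k; omega)
    have hψDa : ψ (dist (y (a k)) (y (a k + 1))) ≤ ψ (dist (y k) (y (k + 1))) :=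
      hψmono dist_nonneg hDk0 hDa
    have hψDb : ψ (dist (y (b k)) (y (b k + 1))) ≤ ψ (dist (y k) (y (k + 1))) :=
      hψmono dist_nonneg hDk0 hDb
    have hψtk : ψ (dist (y (a k)) (y (b k))) ≤ ψ (ε / 2 + dist (y k) (y (k + 1))) :=
      hψmono dist_nonneg (add_nonneg he.le hDk0) htk2
    have hαtk : α (dist (y (a k)) (y (b k))) ≤ c := hαle _ htkIoo
    have hβtk := hβ (dist (y (a k)) (y (b k))) dist_nonneg
    have hγtk := hγ (dist (y (a k)) (y (b k))) dist_nonneg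
    have hα0 := (hα (dist (y (a k)) (y (b k))) dist_nonneg).1
    have hu : max (ε / 2 - 2 * dist (y k) (y (k + 1))) 0 ≤
        dist (y (a k + 1)) (y (b k + 1)) := by
      apply max_le _ dist_nonneg
      have htri : dist (y (a k)) (y (b k)) ≤
          dist (y (a k)) (y (a k + 1)) + dist (y (a k + 1)) (y (b k + 1)) +
            dist (y (b k + 1)) (y (b k)) := dist_triangle4 _ _ _ _
      have hcm : dist (y (b k + 1)) (y (b k)) = dist (y (b k)) (y (b k + 1)) :=
        dist_comm _ _
      rw [hcm] at htri
      linarith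
    have hψu : ψ (max (ε / 2 - 2 * dist (y k) (y (k + 1))) 0) ≤
        ψ (dist (y (a k + 1)) (y (b k + 1))) :=
      hψmono (Set.mem_Ici.mpr (le_max_right _ _)) dist_nonneg hu
    have hn1 : 0 ≤ ψ (dist (y (a k)) (y (b k))) := hψ0 _ dist_nonneg
    have hn2 : 0 ≤ ψ (dist (y k) (y (k + 1))) := hψ0 _ hDk0
    have hn3 : 0 ≤ ψ (dist (y (a k)) (y (a k + 1))) := hψ0 _ dist_nonneg
    have hn4 : 0 ≤ ψ (dist (y (b k)) (y (b k + 1))) := hψ0 _ dist_nonneg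
    have t1 : α (dist (y (a k)) (y (b k))) * ψ (dist (y (a k)) (y (b k))) ≤
        c * ψ (ε / 2 + dist (y k) (y (k + 1))) :=
      le_trans (mul_le_mul_of_nonneg_right hαtk hn1) (mul_le_mul_of_nonneg_left hψtk hc0)
    have t2 : β (dist (y (a k)) (y (b k))) * ψ (dist (y (a k)) (y (a k + 1))) ≤
        ψ (dist (y k) (y (k + 1))) := by nlinarith [hβtk.1, hβtk.2]
    have t3 : γ (dist (y (a k)) (y (b k))) * ψ (dist (y (b k)) (y (b k + 1))) ≤
        ψ (dist (y k) (y (k + 1))) := by nlinarith [hγtk.1, hγtk.2]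
    linarith
  have hz1 : Filter.Tendsto (fun k => max (ε / 2 - 2 * dist (y k) (y (k + 1))) 0)
      Filter.atTop (𝓝 (ε / 2)) := by
    have h1 : Filter.Tendsto (fun k => ε / 2 - 2 * dist (y k) (y (k + 1)))
        Filter.atTop (𝓝 (ε / 2)) := by
      have h2 := (hDlim.const_mul (2 : ℝ))
      have h3 := tendsto_const_nhds (x := ε / 2) (f := Filter.atTop (α := ℕ)).sub h2
      simpa using h3
    have h4 := h1.max (tendsto_const_nhds (x := (0 : ℝ)))
    rwa [max_eq_left he.le] at h4
  have hL : Filter.Tendsto (fun k => ψ (max (ε / 2 - 2 * dist (y k) (y (k + 1))) 0))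
      Filter.atTop (𝓝 (ψ (ε / 2))) :=
    hψcomp _ _ he.le (fun k => le_max_right _ _) hz1
  have hR1 : Filter.Tendsto (fun k => ψ (ε / 2 + dist (y k) (y (k + 1))))
      Filter.atTop (𝓝 (ψ (ε / 2))) := by
    have h1 : Filter.Tendsto (fun k => ε / 2 + dist (y k) (y (k + 1)))
        Filter.atTop (𝓝 (ε / 2)) := by
      simpa using (tendsto_const_nhds (x := ε / 2) (f := Filter.atTop (α := ℕ))).add hDlim
    exact hψcomp _ _ he.le (fun k => add_nonneg he.le dist_nonneg) h1
  have hR2 : Filter.Tendsto (fun k => ψ (dist (y k) (y (k + 1)))) Filter.atTop (𝓝 0) := by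
    have h1 := hψcomp _ _ le_rfl (fun k => dist_nonneg) hDlim
    rwa [hψ0eq] at h1
  have hR : Filter.Tendsto
      (fun k => c * ψ (ε / 2 + dist (y k) (y (k + 1))) + 2 * ψ (dist (y k) (y (k + 1))))
      Filter.atTop (𝓝 (c * ψ (ε / 2) + 2 * 0)) :=
    (hR1.const_mul c).add (hR2.const_mul 2)
  have hfinal : ψ (ε / 2) ≤ c * ψ (ε / 2) + 2 * 0 :=
    le_of_tendsto_of_tendsto hL hR hev
  have hψe : 0 < ψ (ε / 2) :=
    lt_of_le_of_ne (hψ0 _ he.le) fun h => (ne_of_gt he) ((hψiff _ he.le).1 h.symm)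
  nlinarith

/-- If `S(M) ⊆ T(M)` and `(S,T)` is a `ψ-(α,β,γ)`-contraction pair, then any sequence with
`S x_n = T x_{n+1}` yields a Cauchy sequence `y_n = S x_n`. -/
theorem orbit_is_cauchy {M : Type*} [MetricSpace M] (S T : M → M)
    (ψ α β γ : ℝ → ℝ)
    (hrange : Set.range S ⊆ Set.range T)
    (hST : ContractionPair S T ψ α β γ)
    (x : ℕ → M) (hx : ∀ n : ℕ, S (x n) = T (x (n + 1))) :
    CauchySeq (fun n => S (x n)) := by
  obtain ⟨hψ, hpar, hcontr⟩ := hST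
  apply cauchy_aux hψ hpar
  intro a b
  have h := hcontr (x (a + 1)) (x (b + 1))
  rw [← hx a, ← hx b] at h
  rw [dist_comm (S (x (a + 1))) (S (x a)), dist_comm (S (x (b + 1))) (S (x b))] at h
  exact h
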